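/- For the stacked-book graph G_{m,2} = S_m □ P_2 with m ≥ 2, the maximum induced matching number equals m - 1. -/

import Mathlib

open SimpleGraph

/-- The star graph on `m` vertices: vertex `0` is the center, the rest are leaves. -/
def starGraph (m : ℕ) : SimpleGraph (Fin m) :=
  SimpleGraph.fromRel (fun i _ => i.val = 0)

/-- `M` is an induced matching of `G`: every element of `M` is an edge of `G`, and no two
distinct edges of `M` share an endpoint or have endpoints joined by an edge of `G`. -/
def IsInducedMatching {V : Type*} (G : SimpleGraph V) (M : Finset (Sym2 V)) : Prop :=
  ↑M ⊆ G.edgeSet ∧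
    ∀ e₁ ∈ M, ∀ e₂ ∈ M, e₁ ≠ e₂ → ∀ u ∈ e₁, ∀ v ∈ e₂, u ≠ v ∧ ¬G.Adj u v

/-- The maximum induced matching number of `G`. -/
noncomputable def im {V : Type*} (G : SimpleGraph V) : ℕ :=
  sSup {k | ∃ M : Finset (Sym2 V), IsInducedMatching G M ∧ M.card = k}

/-- The stacked-book graph `G_{m,n} = S_m □ P_n`. -/
def stackedBook (m n : ℕ) : SimpleGraph (Fin m × Fin n) :=
  starGraph m □ SimpleGraph.pathGraph n

lemma sb_adj {m : ℕ} {x y : Fin m × Fin 2} :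
    (stackedBook m 2).Adj x y ↔
      (x.1 ≠ y.1 ∧ (x.1.val = 0 ∨ y.1.val = 0) ∧ x.2 = y.2) ∨ (x.1 = y.1 ∧ x.2 ≠ y.2) := by
  have h2 : ∀ a b : Fin 2, (pathGraph 2).Adj a b ↔ a ≠ b := by
    intro a b
    rw [pathGraph_adj]
    have ha := a.isLt; have hb := b.isLt
    constructor
    · intro h; simp only [ne_eq, Fin.ext_iff]; omega
    · intro h; simp only [ne_eq, Fin.ext_iff] at h; omega
  constructor
  · intro h
    rcases (boxProd_adj).1 h with ⟨h1, h2'⟩ | ⟨h1, h2'⟩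
    · rcases (fromRel_adj _ _ _).1 h1 with ⟨hne, hz⟩
      exact Or.inl ⟨hne, hz, h2'⟩
    · exact Or.inr ⟨h2', (h2 _ _).1 h1⟩
  · rintro (⟨hne, hz, he⟩ | ⟨he, hne⟩)
    · exact boxProd_adj.2 (Or.inl ⟨(fromRel_adj _ _ _).2 ⟨hne, hz⟩, he⟩)
    · exact boxProd_adj.2 (Or.inr ⟨(h2 _ _).2 hne, he⟩)

/-- Every edge of the stacked book contains a vertex equal or adjacent to the
center vertex `(0, j)`. -/
lemma center_hit {m : ℕ} (hm : 2 ≤ m) (j : Fin 2) {u v : Fin m × Fin 2}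
    (h : (stackedBook m 2).Adj u v) :
    ∃ w, (w = u ∨ w = v) ∧
      (w = ((⟨0, by omega⟩ : Fin m), j) ∨ (stackedBook m 2).Adj ((⟨0, by omega⟩ : Fin m), j) w) := by
  set c0 : Fin m := ⟨0, by omega⟩ with hc0
  rcases sb_adj.1 h with ⟨hne, hz, he⟩ | ⟨he, hne⟩
  · -- horizontal edge: some endpoint has first coordinate 0
    rcases hz with hz | hz
    · refine ⟨u, Or.inl rfl, ?_⟩
      have hu1 : u.1 = c0 := Fin.ext hz
      by_cases hj : u.2 = j
      · left; rw [← hu1, ← hj]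
      · right
        refine sb_adj.2 (Or.inr ⟨?_, ?_⟩)
        · simp [hu1]
        · simp; exact fun h' => hj h'.symm
    · refine ⟨v, Or.inr rfl, ?_⟩
      have hv1 : v.1 = c0 := Fin.ext hz
      by_cases hj : v.2 = j
      · left; rw [← hv1, ← hj]
      · right
        refine sb_adj.2 (Or.inr ⟨?_, ?_⟩)
        · simp [hv1]
        · simp; exact fun h' => hj h'.symm
  · -- vertical edge: one of u, v lies in row j
    have hcase : u.2 = j ∨ v.2 = j := by
      have h1 := u.2.isLt; have h2 := v.2.isLt; have h3 := j.isLt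
      simp only [ne_eq, Fin.ext_iff] at hne ⊢
      omega
    have key : ∀ w : Fin m × Fin 2, w.2 = j → (w = u ∨ w = v) →
        (w = (c0, j) ∨ (stackedBook m 2).Adj (c0, j) w) := by
      intro w hw _
      by_cases hw1 : w.1 = c0
      · left; rw [← hw1, ← hw]
      · right
        refine sb_adj.2 (Or.inl ⟨?_, ?_, ?_⟩)
        · simp; exact fun h' => hw1 h'.symm
        · left; rfl
        · simp [hw]
    rcases hcase with hj | hj
    · exact ⟨u, Or.inl rfl, key u hj (Or.inl rfl)⟩
    · exact ⟨v, Or.inr rfl, key v hj (Or.inr rfl)⟩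

lemma card_le_upper {m : ℕ} (hm : 2 ≤ m) (M : Finset (Sym2 (Fin m × Fin 2)))
    (hM : IsInducedMatching (stackedBook m 2) M) : M.card ≤ m - 1 := by
  obtain ⟨hsub, hind⟩ := hM
  by_cases hcard : M.card ≤ 1
  · omega
  push_neg at hcard
  -- every edge of M is a "leaf vertical": s((i,0),(i,1)) with i ≠ 0
  have hleaf : ∀ e ∈ M, ∃ i : Fin m, i.val ≠ 0 ∧
      e = s((i, (0 : Fin 2)), (i, (1 : Fin 2))) := by
    intro e he
    obtain ⟨u, v, rfl⟩ : ∃ u v, e = s(u, v) := ⟨e.out.1, e.out.2, by exact e.out_eq.symm⟩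
    have hadj : (stackedBook m 2).Adj u v := hsub he
    -- first, no endpoint can have first coordinate 0
    have hno : ∀ w : Fin m × Fin 2, (w = u ∨ w = v) → w.1.val ≠ 0 := by
      intro w hw hw0
      -- w is a center vertex; take another edge and derive a contradiction
      have hc : w = ((⟨0, by omega⟩ : Fin m), w.2) := by
        apply Prod.ext
        · exact Fin.ext hw0
        · rfl
      obtain ⟨e', he', hne'⟩ : ∃ e' ∈ M, e' ≠ s(u, v) := by
        by_contra hcon
        push_neg at hcon
        have : M ⊆ {s(u, v)} := fun x hx => Finset.mem_singleton.2 (hcon x hx)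
        have := Finset.card_le_card this
        simp at this
        omega
      obtain ⟨u', v', rfl⟩ : ∃ u v, e' = s(u, v) := ⟨e'.out.1, e'.out.2, by exact e'.out_eq.symm⟩
      have hadj' : (stackedBook m 2).Adj u' v' := hsub he'
      obtain ⟨w', hw'mem, hw'⟩ := center_hit hm w.2 hadj'
      have hwmem : w ∈ s(u, v) := by
        rcases hw with rfl | rfl
        · exact Sym2.mem_mk_left _ _
        · exact Sym2.mem_mk_right _ _
      have hw'mem2 : w' ∈ s(u', v') := by
        rcases hw'mem with rfl | rfl
        · exact Sym2.mem_mk_left _ _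
        · exact Sym2.mem_mk_right _ _
      have := hind _ he _ he' (Ne.symm hne') w hwmem w' hw'mem2
      rw [← hc] at hw'
      rcases hw' with rfl | hadj''
      · exact this.1 rfl
      · exact this.2 hadj''
    -- now the edge must be vertical
    rcases sb_adj.1 hadj with ⟨_, hz, _⟩ | ⟨he1, hne2⟩
    · rcases hz with hz | hz
      · exact absurd hz (hno u (Or.inl rfl))
      · exact absurd hz (hno v (Or.inr rfl))
    · refine ⟨u.1, hno u (Or.inl rfl), ?_⟩
      have h1 := u.2.isLt; have h2 := v.2.isLt
      have hne2' : u.2.val ≠ v.2.val := fun h => hne2 (Fin.ext h)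
      rcases Nat.lt_or_ge u.2.val 1 with h | h
      · have hu2 : u.2 = 0 := Fin.ext (by omega)
        have hv2 : v.2 = 1 := Fin.ext (by omega)
        have ha : ((u.1, (0:Fin 2)) : Fin m × Fin 2) = u := Prod.ext rfl hu2.symm
        have hb : ((u.1, (1:Fin 2)) : Fin m × Fin 2) = v := Prod.ext he1 hv2.symm
        rw [ha, hb]
      · have hu2 : u.2 = 1 := Fin.ext (by omega)
        have hv2 : v.2 = 0 := Fin.ext (by omega)
        have ha : ((u.1, (0:Fin 2)) : Fin m × Fin 2) = v := Prod.ext he1 hv2.symm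
        have hb : ((u.1, (1:Fin 2)) : Fin m × Fin 2) = u := Prod.ext rfl hu2.symm
        rw [ha, hb]
        exact Sym2.eq_swap
    -- injection into the nonzero indices
  classical
  have hinj : Set.InjOn (fun e : Sym2 (Fin m × Fin 2) => e.out.1.1) M := by
    intro e₁ h₁ e₂ h₂ hfe
    obtain ⟨i₁, hi₁, rfl⟩ := hleaf e₁ h₁
    obtain ⟨i₂, hi₂, rfl⟩ := hleaf e₂ h₂
    have m₁ : (s((i₁, (0:Fin 2)), (i₁, (1:Fin 2)))).out.1 ∈ s((i₁, (0:Fin 2)), (i₁, (1:Fin 2))) :=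
      Sym2.out_fst_mem _
    have m₂ : (s((i₂, (0:Fin 2)), (i₂, (1:Fin 2)))).out.1 ∈ s((i₂, (0:Fin 2)), (i₂, (1:Fin 2))) :=
      Sym2.out_fst_mem _
    have e₁1 : (s((i₁, (0:Fin 2)), (i₁, (1:Fin 2)))).out.1.1 = i₁ := by
      rcases Sym2.mem_iff.1 m₁ with h | h <;> rw [h]
    have e₂1 : (s((i₂, (0:Fin 2)), (i₂, (1:Fin 2)))).out.1.1 = i₂ := by
      rcases Sym2.mem_iff.1 m₂ with h | h <;> rw [h]
    simp only at hfe
    rw [e₁1, e₂1] at hfe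
    rw [hfe]
  have hmaps : ∀ e ∈ M, e.out.1.1 ∈ Finset.univ.filter (fun i : Fin m => i.val ≠ 0) := by
    intro e he
    obtain ⟨i, hi, rfl⟩ := hleaf e he
    have m₁ : (s((i, (0:Fin 2)), (i, (1:Fin 2)))).out.1 ∈ s((i, (0:Fin 2)), (i, (1:Fin 2))) :=
      Sym2.out_fst_mem _
    have : (s((i, (0:Fin 2)), (i, (1:Fin 2)))).out.1.1 = i := by
      rcases Sym2.mem_iff.1 m₁ with h | h <;> rw [h]
    rw [this]
    simp [hi]
  have hcard2 : M.card ≤ (Finset.univ.filter (fun i : Fin m => i.val ≠ 0)).card :=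
    Finset.card_le_card_of_injOn _ hmaps hinj
  have hfc : (Finset.univ.filter (fun i : Fin m => i.val ≠ 0)).card = m - 1 := by
    have h0 : (Finset.univ.filter (fun i : Fin m => i.val = 0)) = {(⟨0, by omega⟩ : Fin m)} := by
      ext i
      simp [Fin.ext_iff]
    have := Finset.card_filter_add_card_filter_not
      (s := (Finset.univ : Finset (Fin m))) (p := fun i : Fin m => i.val = 0)
    rw [h0] at this
    simp only [Finset.card_singleton, Finset.card_univ, Fintype.card_fin] at this
    simp only [ne_eq]
    omega
  omega

theorem im_stackedBook_two (m : ℕ) (hm : 2 ≤ m) :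
    im (stackedBook m 2) = m - 1 := by
  classical
  have h0 : (0 : ℕ) < m := by omega
  -- the explicit induced matching of size m - 1
  set M : Finset (Sym2 (Fin m × Fin 2)) :=
    (Finset.univ.filter (fun i : Fin m => i.val ≠ 0)).image
      (fun i => s((i, (0 : Fin 2)), (i, (1 : Fin 2)))) with hMdef
  have hMmem : ∀ e ∈ M, ∃ i : Fin m, i.val ≠ 0 ∧ e = s((i, (0:Fin 2)), (i, (1:Fin 2))) := by
    intro e he
    simp only [hMdef, Finset.mem_image, Finset.mem_filter] at he
    obtain ⟨i, ⟨_, hi⟩, rfl⟩ := he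
    exact ⟨i, hi, rfl⟩
  have hMind : IsInducedMatching (stackedBook m 2) M := by
    constructor
    · intro e he
      obtain ⟨i, hi, rfl⟩ := hMmem e (by exact_mod_cast he)
      rw [SimpleGraph.mem_edgeSet]
      refine sb_adj.2 (Or.inr ⟨rfl, ?_⟩)
      simp
    · intro e₁ h₁ e₂ h₂ hne u hu v hv
      obtain ⟨i₁, hi₁, rfl⟩ := hMmem e₁ h₁
      obtain ⟨i₂, hi₂, rfl⟩ := hMmem e₂ h₂
      have hii : i₁ ≠ i₂ := by
        rintro rfl; exact hne rfl
      have hu1 : u.1 = i₁ := by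
        rcases Sym2.mem_iff.1 hu with rfl | rfl <;> rfl
      have hv1 : v.1 = i₂ := by
        rcases Sym2.mem_iff.1 hv with rfl | rfl <;> rfl
      constructor
      · intro h; rw [h] at hu1; rw [hu1] at hv1; exact hii hv1
      · intro hadj
        rcases sb_adj.1 hadj with ⟨_, hz, _⟩ | ⟨he1, _⟩
        · rw [hu1, hv1] at hz
          rcases hz with hz | hz
          · exact hi₁ hz
          · exact hi₂ hz
        · rw [hu1, hv1] at he1; exact hii he1
  have hMcard : M.card = m - 1 := by
    rw [hMdef, Finset.card_image_of_injOn]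
    · have h0' : (Finset.univ.filter (fun i : Fin m => i.val = 0)) = {(⟨0, by omega⟩ : Fin m)} := by
        ext i
        simp [Fin.ext_iff]
      have := Finset.card_filter_add_card_filter_not
        (s := (Finset.univ : Finset (Fin m))) (p := fun i : Fin m => i.val = 0)
      rw [h0'] at this
      simp only [Finset.card_singleton, Finset.card_univ, Fintype.card_fin] at this
      simp only [ne_eq]
      omega
    · intro a _ b _ hab
      simp only [Sym2.eq, Sym2.rel_iff', Prod.mk.injEq, Prod.swap_prod_mk] at hab
      rcases hab with ⟨⟨h, _⟩, _⟩ | ⟨⟨h, hc⟩, _⟩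
      · exact h
      · exact absurd hc (by simp [Fin.ext_iff])
  have hmem : (m - 1) ∈ {k | ∃ M : Finset (Sym2 (Fin m × Fin 2)),
      IsInducedMatching (stackedBook m 2) M ∧ M.card = k} := ⟨M, hMind, hMcard⟩
  have hbdd : ∀ k ∈ {k | ∃ M : Finset (Sym2 (Fin m × Fin 2)),
      IsInducedMatching (stackedBook m 2) M ∧ M.card = k}, k ≤ m - 1 := by
    rintro k ⟨N, hN, rfl⟩
    exact card_le_upper hm N hN
  unfold im
  exact le_antisymm (csSup_le ⟨m - 1, hmem⟩ hbdd) (le_csSup ⟨m - 1, hbdd⟩ hmem)
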